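/- For all x ∈ (0, π/2), one has tan(x) < π²·x/(π² − 4x²). -/

import Mathlib

open Real Set

private lemma tan_div_mono : StrictMonoOn (fun t : ℝ => Real.tan t / t) (Set.Ioo 0 (Real.pi / 2)) := by
  apply strictMonoOn_of_deriv_pos (convex_Ioo _ _)
  · intro t ht
    have hc : Real.cos t ≠ 0 :=
      ne_of_gt (Real.cos_pos_of_mem_Ioo ⟨by linarith [ht.1, Real.pi_pos], ht.2⟩)
    exact ((Real.continuousAt_tan.2 hc).continuousWithinAt.div
      continuousWithinAt_id (ne_of_gt ht.1))
  · intro t ht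
    rw [interior_Ioo] at ht
    have ht0 : 0 < t := ht.1
    have hcpos : 0 < Real.cos t :=
      Real.cos_pos_of_mem_Ioo ⟨by linarith [Real.pi_pos], ht.2⟩
    have hc : Real.cos t ≠ 0 := ne_of_gt hcpos
    have hd : HasDerivAt (fun t : ℝ => Real.tan t / t)
        ((1 / Real.cos t ^ 2 * t - Real.tan t * 1) / t ^ 2) t :=
      (Real.hasDerivAt_tan hc).div (hasDerivAt_id t) (ne_of_gt ht0)
    rw [hd.deriv]
    have hs : Real.sin t * Real.cos t < t := by
      have := Real.sin_lt (by linarith : (0:ℝ) < 2 * t)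
      rw [Real.sin_two_mul] at this; linarith
    have key : 1 / Real.cos t ^ 2 * t - Real.tan t * 1
        = (t - Real.sin t * Real.cos t) / Real.cos t ^ 2 := by
      rw [Real.tan_eq_sin_div_cos]; field_simp
    rw [key]
    have hc2 : (0:ℝ) < Real.cos t ^ 2 := by positivity
    have ht2 : (0:ℝ) < t ^ 2 := by positivity
    exact div_pos (div_pos (by linarith) hc2) ht2

theorem stmt1 (x : ℝ) (hx : x ∈ Set.Ioo 0 (Real.pi / 2)) :
    Real.tan x < Real.pi ^ 2 * x / (Real.pi ^ 2 - 4 * x ^ 2) := by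
  obtain ⟨hx0, hx2⟩ := hx
  have hpi3 : (3:ℝ) < Real.pi := Real.pi_gt_three
  have hk : (0:ℝ) < Real.pi ^ 2 - 8 := by nlinarith
  have hden : 0 < Real.pi ^ 2 - 4 * x ^ 2 := by nlinarith
  have hcx : 0 < Real.cos x := Real.cos_pos_of_mem_Ioo ⟨by linarith, hx2⟩
  -- the auxiliary function
  set f : ℝ → ℝ := fun t => Real.pi ^ 2 * t * Real.cos t - (Real.pi ^ 2 - 4 * t ^ 2) * Real.sin t with hf
  have hcont : Continuous f := by fun_prop
  have hderiv : ∀ t : ℝ, HasDerivAt f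
      (t * (4 * t * Real.cos t - (Real.pi ^ 2 - 8) * Real.sin t)) t := by
    intro t
    have h1 := ((hasDerivAt_id t).const_mul (Real.pi ^ 2)).mul (Real.hasDerivAt_cos t)
    have hp := ((hasDerivAt_pow 2 t).const_mul (4:ℝ)).const_sub (Real.pi ^ 2)
    have := h1.sub (hp.mul (Real.hasDerivAt_sin t))
    refine this.congr_deriv ?_
    simp only [id_eq, pow_one, Nat.cast_ofNat]
    ring
  -- sign characterization of f' on (0, π/2)
  have hsign : ∀ t ∈ Set.Ioo (0:ℝ) (Real.pi / 2),
      (0 < 4 * t * Real.cos t - (Real.pi ^ 2 - 8) * Real.sin t ↔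
        Real.tan t / t < 4 / (Real.pi ^ 2 - 8)) := by
    intro t ht
    have hct : 0 < Real.cos t := Real.cos_pos_of_mem_Ioo ⟨by linarith [ht.1], ht.2⟩
    rw [Real.tan_eq_sin_div_cos, div_div, div_lt_div_iff₀ (mul_pos hct ht.1) hk]
    constructor <;> intro h <;> nlinarith [ht.1]
  have hfx : 0 < f x := by
    by_cases hcase : Real.tan x / x < 4 / (Real.pi ^ 2 - 8)
    · -- f strictly increasing on [0, x]
      have hmono : StrictMonoOn f (Set.Icc 0 x) := by
        apply strictMonoOn_of_deriv_pos (convex_Icc _ _) hcont.continuousOn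
        intro t ht
        rw [interior_Icc] at ht
        have ht' : t ∈ Set.Ioo (0:ℝ) (Real.pi / 2) := ⟨ht.1, lt_trans ht.2 hx2⟩
        have hlt : Real.tan t / t < 4 / (Real.pi ^ 2 - 8) :=
          lt_trans (tan_div_mono ht' ⟨hx0, hx2⟩ ht.2) hcase
        rw [(hderiv t).deriv]
        exact mul_pos ht.1 ((hsign t ht').2 hlt)
      have := hmono (Set.left_mem_Icc.2 hx0.le) (Set.right_mem_Icc.2 hx0.le) hx0
      simpa [hf] using this
    · -- f strictly decreasing on [x, π/2]
      push_neg at hcase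
      have hanti : StrictAntiOn f (Set.Icc x (Real.pi / 2)) := by
        apply strictAntiOn_of_deriv_neg (convex_Icc _ _) hcont.continuousOn
        intro t ht
        rw [interior_Icc] at ht
        have ht' : t ∈ Set.Ioo (0:ℝ) (Real.pi / 2) := ⟨lt_trans hx0 ht.1, ht.2⟩
        have hgt : 4 / (Real.pi ^ 2 - 8) < Real.tan t / t :=
          lt_of_le_of_lt hcase (tan_div_mono ⟨hx0, hx2⟩ ht' ht.1)
        rw [(hderiv t).deriv]
        have : 4 * t * Real.cos t - (Real.pi ^ 2 - 8) * Real.sin t ≤ 0 := by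
          by_contra h
          push_neg at h
          exact absurd ((hsign t ht').1 h) (not_lt.2 hgt.le)
        have hne : 4 * t * Real.cos t - (Real.pi ^ 2 - 8) * Real.sin t ≠ 0 := by
          intro h0
          have : (0:ℝ) < 4 * t * Real.cos t - (Real.pi ^ 2 - 8) * Real.sin t ↔ _ :=
            hsign t ht'
          -- if it were 0, then tan t / t = 4/(π²-8), contradicting strict >
          have hct : 0 < Real.cos t := Real.cos_pos_of_mem_Ioo ⟨by linarith [ht'.1], ht'.2⟩
          have : Real.tan t / t = 4 / (Real.pi ^ 2 - 8) := by
            rw [Real.tan_eq_sin_div_cos, div_div, div_eq_div_iff (ne_of_gt (mul_pos hct ht'.1)) (ne_of_gt hk)]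
            nlinarith [ht'.1]
          rw [this] at hgt; exact lt_irrefl _ hgt
        have hneg : 4 * t * Real.cos t - (Real.pi ^ 2 - 8) * Real.sin t < 0 :=
          lt_of_le_of_ne this hne
        exact mul_neg_of_pos_of_neg ht'.1 hneg
      have hmem1 : x ∈ Set.Icc x (Real.pi / 2) := Set.left_mem_Icc.2 hx2.le
      have hmem2 : Real.pi / 2 ∈ Set.Icc x (Real.pi / 2) := Set.right_mem_Icc.2 hx2.le
      have := hanti hmem1 hmem2 hx2
      have hend : f (Real.pi / 2) = 0 := by
        simp [hf, Real.cos_pi_div_two, Real.sin_pi_div_two]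
        ring
      rw [hend] at this
      exact this
  -- conclude
  rw [lt_div_iff₀ hden, Real.tan_eq_sin_div_cos, div_mul_eq_mul_div, div_lt_iff₀ hcx]
  have : Real.pi ^ 2 * x * Real.cos x - (Real.pi ^ 2 - 4 * x ^ 2) * Real.sin x > 0 := hfx
  nlinarith
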